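/- Let θ, φ : ℝ → ℝ be continuous and a, b : ℝ → ℝ continuous with a(x) > 0 for all x, and suppose that sin(θ(x))·cos(φ(x)) = (a(x)·sin(φ(x)) + b(x)·cos(φ(x)))·cos(θ(x)) for all x ∈ ℝ (a continuous version of the relation tan θ = a·tan φ + b). Then: (i) for every x, cos(θ(x)) = 0 if and only if cos(φ(x)) = 0 (θ and φ take values in (ℤ + 1/2)π at exactly the same points); (ii) the difference θ − φ is globally bounded: there is M > 0 with |θ(x) − φ(x)| ≤ M for all x ∈ ℝ. -/
import Mathlib


noncomputable section

open Real

/-- Any interval of length at least `2π` contains a point of `t0 + 2πℤ`. -/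
private lemma exists_crit (u v t0 : ℝ) (huv : u + 2 * π ≤ v) :
    ∃ k : ℤ, u ≤ t0 + k * (2 * π) ∧ t0 + k * (2 * π) ≤ v := by
  have h2π : (0:ℝ) < 2 * π := by positivity
  refine ⟨⌈(u - t0) / (2 * π)⌉, ?_, ?_⟩
  · have h := Int.le_ceil ((u - t0) / (2 * π))
    rw [div_le_iff₀ h2π] at h
    linarith
  · have h := Int.ceil_lt_add_one ((u - t0) / (2 * π))
    have h' : (⌈(u - t0) / (2 * π)⌉ : ℝ) * (2 * π) <
        ((u - t0) / (2 * π) + 1) * (2 * π) := mul_lt_mul_of_pos_right h h2π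
    rw [add_mul, div_mul_cancel₀ _ (ne_of_gt h2π), one_mul] at h'
    linarith

/-- Key algebraic fact: if `sin θ · cos φ = (a sin φ + b cos φ) cos θ` and
`sin (θ - φ) = 0`, then `E · cos (θ - φ) > 0` where
`E = cos θ cos φ + sin θ (a sin φ + b cos φ)`. -/
private lemma key_alg (s c S C A B : ℝ) (hA : 0 < A)
    (pθ : s ^ 2 + c ^ 2 = 1) (pφ : S ^ 2 + C ^ 2 = 1)
    (h1 : s * C = (A * S + B * C) * c)
    (hsin : s * C = c * S) :
    0 < (c * C + s * (A * S + B * C)) * (c * C + s * S) := by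
  have hc' : c = (c * C + s * S) * C := by
    linear_combination (-S) * hsin + (-c) * pφ
  have hs' : s = (c * C + s * S) * S := by
    linear_combination C * hsin + (-s) * pφ
  have hD2 : (c * C + s * S) ^ 2 = 1 := by
    linear_combination pθ + (-c) * hc' + (-s) * hs'
  have hrel : S * C = (A * S + B * C) * C := by
    linear_combination (c * C + s * S) * h1 + (-(c * C + s * S) * C) * hs'
      + ((c * C + s * S) * (A * S + B * C)) * hc'
      + (-(S * C - (A * S + B * C) * C)) * hD2
  have hED : (c * C + s * (A * S + B * C)) * (c * C + s * S)
      = C ^ 2 + A * S ^ 2 + B * S * C := by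
    linear_combination (C * (c * C + s * S)) * hc'
      + ((c * C + s * S) * (A * S + B * C)) * hs'
      + (C ^ 2 + A * S ^ 2 + B * S * C) * hD2
  rw [hED]
  rcases eq_or_ne C 0 with hC | hC
  · subst hC
    have hq : (0:ℝ) ^ 2 + A * S ^ 2 + B * S * 0 = A := by linear_combination A * pφ
    rw [hq]; exact hA
  · have h1' : (C ^ 2 + A * S ^ 2 + B * S * C) * C = 1 * C := by
      linear_combination (-S) * hrel + C * pφ
    have := mul_right_cancel₀ hC h1'
    rw [this]; norm_num

/-- **Modified Kepler transformation.**  If continuous `θ, φ` satisfy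
`sin θ · cos φ = (a·sin φ + b·cos φ)·cos θ` with continuous `a > 0` and continuous `b`
(a pole-free version of `tan θ = a·tan φ + b`), then `cos θ` and `cos φ` vanish at
exactly the same points, and `θ − φ` is globally bounded. -/
theorem modified_kepler_transformation
    (θ φ a b : ℝ → ℝ)
    (hθ : Continuous θ) (hφ : Continuous φ)
    (ha : Continuous a) (hb : Continuous b)
    (hapos : ∀ x : ℝ, 0 < a x)
    (h : ∀ x : ℝ, Real.sin (θ x) * Real.cos (φ x) =
      (a x * Real.sin (φ x) + b x * Real.cos (φ x)) * Real.cos (θ x)) :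
    (∀ x : ℝ, Real.cos (θ x) = 0 ↔ Real.cos (φ x) = 0) ∧
    ∃ M > 0, ∀ x : ℝ, |θ x - φ x| ≤ M := by
  have hiff : ∀ x : ℝ, Real.cos (θ x) = 0 ↔ Real.cos (φ x) = 0 := by
    intro x
    have h1 := h x
    have pt := Real.sin_sq_add_cos_sq (θ x)
    have pp := Real.sin_sq_add_cos_sq (φ x)
    have hA := hapos x
    constructor
    · intro hc
      linear_combination Real.sin (θ x) * h1 - Real.cos (φ x) * pt +
        (Real.cos (φ x) * Real.cos (θ x) +
          Real.sin (θ x) * (a x * Real.sin (φ x) + b x * Real.cos (φ x))) * hc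
    · intro hC
      have hAc : a x * Real.cos (θ x) = 0 := by
        linear_combination (-(Real.sin (φ x))) * h1 - a x * Real.cos (θ x) * pp +
          (Real.sin (θ x) * Real.sin (φ x) -
            b x * Real.sin (φ x) * Real.cos (θ x) +
            a x * Real.cos (θ x) * Real.cos (φ x)) * hC
      rcases mul_eq_zero.mp hAc with h' | h'
      · exact absurd h' (ne_of_gt hA)
      · exact h'
  refine ⟨hiff, ?_⟩
  set g : ℝ → ℝ := fun x => θ x - φ x with hgdef
  have hgc : Continuous g := hθ.sub hφ
  set E : ℝ → ℝ := fun x => Real.cos (θ x) * Real.cos (φ x) +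
      Real.sin (θ x) * (a x * Real.sin (φ x) + b x * Real.cos (φ x)) with hEdef
  have hEc : Continuous E := by
    apply Continuous.add
    · exact (Real.continuous_cos.comp hθ).mul (Real.continuous_cos.comp hφ)
    · exact (Real.continuous_sin.comp hθ).mul
        ((ha.mul (Real.continuous_sin.comp hφ)).add
          (hb.mul (Real.continuous_cos.comp hφ)))
  have hEne : ∀ x : ℝ, E x ≠ 0 := by
    intro x hE0
    simp only [hEdef] at hE0
    have h1 := h x
    have pt := Real.sin_sq_add_cos_sq (θ x)
    have pp := Real.sin_sq_add_cos_sq (φ x)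
    have hA := hapos x
    have hC : Real.cos (φ x) = 0 := by
      linear_combination Real.sin (θ x) * h1 + Real.cos (θ x) * hE0 -
        Real.cos (φ x) * pt
    have h2 : a x * Real.sin (φ x) * Real.cos (θ x) = 0 := by
      linear_combination (-1 : ℝ) * h1 +
        (Real.sin (θ x) - b x * Real.cos (θ x)) * hC
    have h3 : a x * Real.sin (φ x) * Real.sin (θ x) = 0 := by
      linear_combination hE0 +
        (-(Real.cos (θ x)) - Real.sin (θ x) * b x) * hC
    have hAS : a x * Real.sin (φ x) = 0 := by
      linear_combination Real.cos (θ x) * h2 + Real.sin (θ x) * h3 +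
        (-(a x * Real.sin (φ x))) * pt
    rcases mul_eq_zero.mp hAS with h' | h'
    · exact absurd h' (ne_of_gt hA)
    · rw [h', hC] at pp
      norm_num at pp
  have key : ∀ x : ℝ, Real.sin (g x) = 0 → 0 < E x * Real.cos (g x) := by
    intro x hs
    have hsin : Real.sin (θ x) * Real.cos (φ x) = Real.cos (θ x) * Real.sin (φ x) := by
      have := Real.sin_sub (θ x) (φ x)
      simp only [hgdef] at hs
      rw [hs] at this
      linarith
    have hk := key_alg (Real.sin (θ x)) (Real.cos (θ x)) (Real.sin (φ x))
      (Real.cos (φ x)) (a x) (b x) (hapos x)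
      (Real.sin_sq_add_cos_sq (θ x)) (Real.sin_sq_add_cos_sq (φ x)) (h x) hsin
    have hcg : Real.cos (g x) = Real.cos (θ x) * Real.cos (φ x) +
        Real.sin (θ x) * Real.sin (φ x) := by
      simp only [hgdef]
      rw [Real.cos_sub]
    simp only [hEdef]
    rw [hcg]
    nlinarith [hk]
  rcases (hEne 0).lt_or_gt with hneg | hpos
  · -- E is everywhere negative; cos (g x) ≠ 1
    have hEneg : ∀ x : ℝ, E x < 0 := by
      intro x
      by_contra hx
      push_neg at hx
      have hx' : 0 < E x := lt_of_le_of_ne hx (Ne.symm (hEne x))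
      have hmem : (0:ℝ) ∈ Set.uIcc (E 0) (E x) :=
        Set.mem_uIcc.mpr (Or.inl ⟨le_of_lt hneg, le_of_lt hx'⟩)
      obtain ⟨z, _, hz⟩ := intermediate_value_uIcc hEc.continuousOn hmem
      exact hEne z hz
    have hcos : ∀ x : ℝ, Real.cos (g x) ≠ 1 := by
      intro x hx
      have hs : Real.sin (g x) = 0 := by
        have := Real.sin_sq_add_cos_sq (g x)
        rw [hx] at this
        have h0 : Real.sin (g x) ^ 2 = 0 := by linarith
        exact pow_eq_zero_iff (by norm_num) |>.mp h0
      have := key x hs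
      rw [hx, mul_one] at this
      linarith [hEneg x]
    have hbound : ∀ x : ℝ, |g x - g 0| < 2 * π := by
      intro x
      by_contra hx
      push_neg at hx
      rcases le_total (g 0) (g x) with h' | h'
      · have huv : g 0 + 2 * π ≤ g x := by
          rw [abs_of_nonneg (by linarith)] at hx; linarith
        obtain ⟨k, hk1, hk2⟩ := exists_crit (g 0) (g x) 0 huv
        have hmem : (0:ℝ) + k * (2 * π) ∈ Set.uIcc (g 0) (g x) :=
          Set.mem_uIcc.mpr (Or.inl ⟨hk1, hk2⟩)
        obtain ⟨z, _, hz⟩ := intermediate_value_uIcc hgc.continuousOn hmem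
        have : Real.cos (g z) = 1 := by
          rw [hz, Real.cos_add_int_mul_two_pi, Real.cos_zero]
        exact hcos z this
      · have huv : g x + 2 * π ≤ g 0 := by
          rw [abs_of_nonpos (by linarith)] at hx; linarith
        obtain ⟨k, hk1, hk2⟩ := exists_crit (g x) (g 0) 0 huv
        have hmem : (0:ℝ) + k * (2 * π) ∈ Set.uIcc (g 0) (g x) :=
          Set.mem_uIcc.mpr (Or.inr ⟨hk1, hk2⟩)
        obtain ⟨z, _, hz⟩ := intermediate_value_uIcc hgc.continuousOn hmem
        have : Real.cos (g z) = 1 := by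
          rw [hz, Real.cos_add_int_mul_two_pi, Real.cos_zero]
        exact hcos z this
    refine ⟨|g 0| + 2 * π, by positivity, ?_⟩
    intro x
    have h1 := hbound x
    have h2 : |g x| ≤ |g 0| + |g x - g 0| := by
      calc |g x| = |g 0 + (g x - g 0)| := by congr 1; ring
        _ ≤ |g 0| + |g x - g 0| := abs_add_le _ _
    simp only [hgdef] at h2 h1 ⊢
    linarith
  · -- E is everywhere positive; cos (g x) ≠ -1
    have hEpos : ∀ x : ℝ, 0 < E x := by
      intro x
      by_contra hx
      push_neg at hx
      have hx' : E x < 0 := lt_of_le_of_ne hx (hEne x)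
      have hmem : (0:ℝ) ∈ Set.uIcc (E 0) (E x) :=
        Set.mem_uIcc.mpr (Or.inr ⟨le_of_lt hx', le_of_lt hpos⟩)
      obtain ⟨z, _, hz⟩ := intermediate_value_uIcc hEc.continuousOn hmem
      exact hEne z hz
    have hcos : ∀ x : ℝ, Real.cos (g x) ≠ -1 := by
      intro x hx
      have hs : Real.sin (g x) = 0 := by
        have := Real.sin_sq_add_cos_sq (g x)
        rw [hx] at this
        have h0 : Real.sin (g x) ^ 2 = 0 := by nlinarith
        exact pow_eq_zero_iff (by norm_num) |>.mp h0
      have := key x hs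
      rw [hx] at this
      linarith [hEpos x]
    have hbound : ∀ x : ℝ, |g x - g 0| < 2 * π := by
      intro x
      by_contra hx
      push_neg at hx
      rcases le_total (g 0) (g x) with h' | h'
      · have huv : g 0 + 2 * π ≤ g x := by
          rw [abs_of_nonneg (by linarith)] at hx; linarith
        obtain ⟨k, hk1, hk2⟩ := exists_crit (g 0) (g x) π huv
        have hmem : π + k * (2 * π) ∈ Set.uIcc (g 0) (g x) :=
          Set.mem_uIcc.mpr (Or.inl ⟨hk1, hk2⟩)
        obtain ⟨z, _, hz⟩ := intermediate_value_uIcc hgc.continuousOn hmem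
        have : Real.cos (g z) = -1 := by
          rw [hz, Real.cos_add_int_mul_two_pi, Real.cos_pi]
        exact hcos z this
      · have huv : g x + 2 * π ≤ g 0 := by
          rw [abs_of_nonpos (by linarith)] at hx; linarith
        obtain ⟨k, hk1, hk2⟩ := exists_crit (g x) (g 0) π huv
        have hmem : π + k * (2 * π) ∈ Set.uIcc (g 0) (g x) :=
          Set.mem_uIcc.mpr (Or.inr ⟨hk1, hk2⟩)
        obtain ⟨z, _, hz⟩ := intermediate_value_uIcc hgc.continuousOn hmem
        have : Real.cos (g z) = -1 := by
          rw [hz, Real.cos_add_int_mul_two_pi, Real.cos_pi]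
        exact hcos z this
    refine ⟨|g 0| + 2 * π, by positivity, ?_⟩
    intro x
    have h1 := hbound x
    have h2 : |g x| ≤ |g 0| + |g x - g 0| := by
      calc |g x| = |g 0 + (g x - g 0)| := by congr 1; ring
        _ ≤ |g 0| + |g x - g 0| := abs_add_le _ _
    simp only [hgdef] at h2 h1 ⊢
    linarith
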